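/- Let f(x,y) = x² − y² and F(W_1, W_2) = f(W_2 W_1) for W_1 ∈ ℝ, W_2 ∈ ℝ². Then (Ŵ_1, Ŵ_2) = (0, (1,0)ᵀ) is a local minimizer of F, even though ∇f(0,0) = 0 and (0,0) is a saddle point (not a local minimum) of f. -/

import Mathlib

open Matrix


/-- `f(x,y) = x² − y²` from the concluding remarks. -/
noncomputable def fs (p : ℝ × ℝ) : ℝ := p.1^2 - p.2^2

/-- Euclidean norm on `ℝ²`. -/
noncomputable def enormR2 (p : ℝ × ℝ) : ℝ := Real.sqrt (p.1^2 + p.2^2)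

lemma enorm_comp {p : ℝ × ℝ} {r : ℝ} (h : enormR2 p ≤ r) : |p.1| ≤ r ∧ |p.2| ≤ r := by
  unfold enormR2 at h
  constructor
  · calc |p.1| = Real.sqrt (p.1^2) := by rw [Real.sqrt_sq_eq_abs]
    _ ≤ Real.sqrt (p.1^2 + p.2^2) := Real.sqrt_le_sqrt (by nlinarith [sq_nonneg p.2])
    _ ≤ r := h
  · calc |p.2| = Real.sqrt (p.2^2) := by rw [Real.sqrt_sq_eq_abs]
    _ ≤ Real.sqrt (p.1^2 + p.2^2) := Real.sqrt_le_sqrt (by nlinarith [sq_nonneg p.1])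
    _ ≤ r := h

/-- For `f(x,y) = x² − y²` and `F(W₁,W₂) = f(W₂ W₁)`, the point `(0, (1,0)ᵀ)` is a local
minimizer of `F`, even though `∇f(0,0) = 0` and `(0,0)` is not a local minimum of `f`. -/
theorem stmt17 :
    (∃ r > (0:ℝ), ∀ (W₁ : ℝ) (W₂ : ℝ × ℝ),
      |W₁ - 0| ≤ r → enormR2 (W₂ - (1, 0)) ≤ r →
      fs (W₁ • W₂) ≥ fs ((0:ℝ) • ((1:ℝ), (0:ℝ)))) ∧
    fderiv ℝ fs (0, 0) = 0 ∧
    ¬ (∃ r > (0:ℝ), ∀ p : ℝ × ℝ, enormR2 (p - (0, 0)) ≤ r → fs p ≥ fs (0, 0)) := by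
  refine ⟨⟨1/4, by norm_num, ?_⟩, ?_, ?_⟩
  · intro W₁ W₂ _ h2
    obtain ⟨ha, hb⟩ := enorm_comp h2
    simp only [Prod.fst_sub, Prod.snd_sub] at ha hb
    have ha' : |W₂.1 - 1| ≤ 1/4 := ha
    have hb' : |W₂.2| ≤ 1/4 := by simpa using hb
    rw [abs_le] at ha' hb'
    simp only [fs, Prod.smul_fst, Prod.smul_snd, smul_eq_mul]
    have key : W₂.1^2 - W₂.2^2 ≥ 0 := by nlinarith [ha'.1, ha'.2, hb'.1, hb'.2]
    nlinarith [mul_nonneg (sq_nonneg W₁) key]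
  · have h : HasFDerivAt fs (0 : ℝ × ℝ →L[ℝ] ℝ) (0, 0) := by
      have h1 := ((hasFDerivAt_fst (𝕜 := ℝ) (p := ((0:ℝ),(0:ℝ)))).mul
          (hasFDerivAt_fst (𝕜 := ℝ) (p := ((0:ℝ),(0:ℝ))))).sub
        ((hasFDerivAt_snd (𝕜 := ℝ) (p := ((0:ℝ),(0:ℝ)))).mul
          (hasFDerivAt_snd (𝕜 := ℝ) (p := ((0:ℝ),(0:ℝ)))))
      have hfs : fs = fun p : ℝ × ℝ => p.1 * p.1 - p.2 * p.2 := by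
        funext p; simp [fs]; ring
      rw [hfs]
      exact h1.congr_fderiv (by ext <;> simp)
    rw [h.fderiv]
  · rintro ⟨r, hr, h⟩
    have := h (0, r) (by
      simp only [enormR2, Prod.fst_sub, Prod.snd_sub]
      norm_num
      rw [Real.sqrt_sq hr.le])
    simp only [fs] at this
    nlinarith
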